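/- arXiv:1408.1435 — 4 statements merged into one kernel-verified Lean document; each statement's English description precedes it below -/
import Mathlib

section
/- Suppose there exists a constant K ∈ ℕ, K ≥ 1, such that every non-negative integer m can be written as m = a₁² + a₂² + a₃² + a₄² where each aᵢ is a non-negative integer satisfying aᵢ = 0 or aᵢ² ≥ m/K². Then for every positive integer n, every integer M ≥ K²n² is expressible as a finite sum of squares of integers ≥ n. -/
def InGamma (n m : ℕ) : Prop :=
  ∃ l : Multiset ℕ, (∀ x ∈ l, n ≤ x) ∧ (l.map (· ^ 2)).sum = m

lemma filter_sq_sum (l : List ℕ) :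
    ((l.filter (· ≠ 0)).map (· ^ 2)).sum = (l.map (· ^ 2)).sum := by
  induction l with
  | nil => simp
  | cons a t ih =>
    simp only [ne_eq, decide_not] at ih
    by_cases h : a = 0 <;> simp [List.filter_cons, h, ih]

theorem four_large_squares_implies_gamma (K : ℕ) (hK : 1 ≤ K)
    (hfour : ∀ m : ℕ, ∃ a : Fin 4 → ℕ,
      (∑ i, (a i) ^ 2 = m) ∧ ∀ i, a i = 0 ∨ m ≤ K ^ 2 * (a i) ^ 2) :
    ∀ n : ℕ, 0 < n → ∀ M : ℕ, K ^ 2 * n ^ 2 ≤ M → InGamma n M := by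
  intro n hn M hM
  obtain ⟨a, hsum, hbig⟩ := hfour M
  refine ⟨((List.ofFn a).filter (· ≠ 0) : List ℕ), ?_, ?_⟩
  · intro x hx
    simp only [Multiset.mem_coe, List.mem_filter, List.mem_ofFn] at hx
    obtain ⟨⟨i, rfl⟩, hx0⟩ := hx
    rcases hbig i with h0 | hle
    · simp [h0] at hx0
    · have h1 : K ^ 2 * n ^ 2 ≤ K ^ 2 * (a i) ^ 2 := le_trans hM hle
      have h2 : n ^ 2 ≤ (a i) ^ 2 :=
        Nat.le_of_mul_le_mul_left h1 (by positivity)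
      exact (Nat.pow_le_pow_iff_left (by norm_num)).mp h2
  · show ((((List.ofFn a).filter (· ≠ 0)).map (· ^ 2) : List ℕ) : Multiset ℕ).sum = M
    rw [Multiset.sum_coe, filter_sq_sum]
    simpa [List.sum_ofFn, Fin.sum_univ_four, add_assoc] using hsum
end

section
/- Let K be a positive real number and n a positive even integer. Then n has a representation n = a₁² + a₂² + a₃² + a₄² with non-negative integers aᵢ, each either 0 or satisfying K²aᵢ² ≥ n, if and only if 4n has such a representation (with the bound K²bᵢ² ≥ 4n for nonzero bᵢ). -/
/-- `m` has a four-square representation with all nonzero parts at least `√m / K`. -/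
def LargeSquares (K : ℝ) (m : ℕ) : Prop :=
  ∃ a : Fin 4 → ℕ, (∑ i, (a i) ^ 2 = m) ∧
    ∀ i, a i = 0 ∨ (m : ℝ) ≤ K ^ 2 * (a i : ℝ) ^ 2

lemma sq_mod_eight (b : ℕ) :
    (b ^ 2 % 8 = 1 ∧ b % 2 = 1) ∨ (b ^ 2 % 8 = 0 ∧ b % 2 = 0) ∨
      (b ^ 2 % 8 = 4 ∧ b % 2 = 0) := by
  have h1 : b ^ 2 % 8 = (b % 8) ^ 2 % 8 := Nat.pow_mod b 2 8
  have h2 : b % 2 = b % 8 % 2 := (Nat.mod_mod_of_dvd b (by norm_num)).symm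
  have h3 : b % 8 < 8 := Nat.mod_lt _ (by norm_num)
  interval_cases h : b % 8 <;> simp_all

theorem large_squares_iff_four_mul (K : ℝ) (hK : 0 < K) (n : ℕ) (hn : 0 < n)
    (hev : Even n) : LargeSquares K n ↔ LargeSquares K (4 * n) := by
  constructor
  · rintro ⟨a, hsum, hbd⟩
    refine ⟨fun i => 2 * a i, ?_, ?_⟩
    · simp only [mul_pow, ← Finset.mul_sum, hsum]; ring
    · intro i
      rcases hbd i with h | h
      · exact Or.inl (by simp [h])
      · right
        push_cast
        nlinarith [h]
  · rintro ⟨b, hsum, hbd⟩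
    have hs : b 0 ^ 2 + b 1 ^ 2 + b 2 ^ 2 + b 3 ^ 2 = 4 * n := by
      rw [← hsum]; simp [Fin.sum_univ_four]
    have h8 : (4 * n) % 8 = 0 := by
      obtain ⟨k, hk⟩ := hev; omega
    have h0 := sq_mod_eight (b 0)
    have h1 := sq_mod_eight (b 1)
    have h2 := sq_mod_eight (b 2)
    have h3 := sq_mod_eight (b 3)
    have key : b 0 % 2 = 0 ∧ b 1 % 2 = 0 ∧ b 2 % 2 = 0 ∧ b 3 % 2 = 0 := by omega
    have heven : ∀ i, b i % 2 = 0 := by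
      intro i
      fin_cases i
      exacts [key.1, key.2.1, key.2.2.1, key.2.2.2]
    have hc : ∀ i, b i = 2 * (b i / 2) := fun i => by have := heven i; omega
    refine ⟨fun i => b i / 2, ?_, ?_⟩
    · show (∑ i, (b i / 2) ^ 2) = n
      have h4 : 4 * ∑ i, (b i / 2) ^ 2 = 4 * n := by
        calc 4 * ∑ i, (b i / 2) ^ 2 = ∑ i, (2 * (b i / 2)) ^ 2 := by
              rw [Finset.mul_sum]; exact Finset.sum_congr rfl (fun i _ => by ring)
          _ = ∑ i, b i ^ 2 := Finset.sum_congr rfl (fun i _ => by rw [← hc i])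
          _ = 4 * n := hsum
      omega
    · intro i
      rcases hbd i with h | h
      · exact Or.inl (by simp [h])
      · right
        have hb2 : (b i : ℝ) = 2 * ((b i / 2 : ℕ) : ℝ) := by
          exact_mod_cast congrArg (Nat.cast : ℕ → ℝ) (hc i)
        push_cast at h ⊢
        rw [hb2] at h
        nlinarith [h]
end

section
/- For every α ∈ ℕ, the number 4^α · 2 cannot be written as a sum of four nonzero integer squares. -/
lemma zmod8_aux : ∀ x y z w : ZMod 8, x^2+y^2+z^2+w^2 = 0 →
    (ZMod.castHom (by norm_num : (2:ℕ) ∣ 8) (ZMod 2)) x = 0 ∧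
    (ZMod.castHom (by norm_num : (2:ℕ) ∣ 8) (ZMod 2)) y = 0 ∧
    (ZMod.castHom (by norm_num : (2:ℕ) ∣ 8) (ZMod 2)) z = 0 ∧
    (ZMod.castHom (by norm_num : (2:ℕ) ∣ 8) (ZMod 2)) w = 0 := by decide

lemma even_of_sum_sq (a₁ a₂ a₃ a₄ : ℤ)
    (h : (8:ℤ) ∣ a₁^2 + a₂^2 + a₃^2 + a₄^2) :
    (2:ℤ) ∣ a₁ ∧ (2:ℤ) ∣ a₂ ∧ (2:ℤ) ∣ a₃ ∧ (2:ℤ) ∣ a₄ := by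
  have h8 : ((a₁^2 + a₂^2 + a₃^2 + a₄^2 : ℤ) : ZMod 8) = 0 := by
    exact_mod_cast (ZMod.intCast_zmod_eq_zero_iff_dvd _ 8).mpr h
  push_cast at h8
  have := zmod8_aux (a₁ : ZMod 8) (a₂ : ZMod 8) (a₃ : ZMod 8) (a₄ : ZMod 8) h8
  obtain ⟨h1, h2, h3, h4⟩ := this
  have f := (ZMod.castHom (by norm_num : (2:ℕ) ∣ 8) (ZMod 2)).comp (Int.castRingHom (ZMod 8))
  refine ⟨?_, ?_, ?_, ?_⟩
  · exact_mod_cast (ZMod.intCast_zmod_eq_zero_iff_dvd a₁ 2).mp ((eq_intCast ((ZMod.castHom (by norm_num : (2:ℕ) ∣ 8) (ZMod 2)).comp (Int.castRingHom (ZMod 8))) a₁).symm.trans h1)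
  · exact_mod_cast (ZMod.intCast_zmod_eq_zero_iff_dvd a₂ 2).mp ((eq_intCast ((ZMod.castHom (by norm_num : (2:ℕ) ∣ 8) (ZMod 2)).comp (Int.castRingHom (ZMod 8))) a₂).symm.trans h2)
  · exact_mod_cast (ZMod.intCast_zmod_eq_zero_iff_dvd a₃ 2).mp ((eq_intCast ((ZMod.castHom (by norm_num : (2:ℕ) ∣ 8) (ZMod 2)).comp (Int.castRingHom (ZMod 8))) a₃).symm.trans h3)
  · exact_mod_cast (ZMod.intCast_zmod_eq_zero_iff_dvd a₄ 2).mp ((eq_intCast ((ZMod.castHom (by norm_num : (2:ℕ) ∣ 8) (ZMod 2)).comp (Int.castRingHom (ZMod 8))) a₄).symm.trans h4)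

theorem four_pow_mul_two_not_sum_four_nonzero_squares (α : ℕ) :
    ¬ ∃ a₁ a₂ a₃ a₄ : ℤ, a₁ ≠ 0 ∧ a₂ ≠ 0 ∧ a₃ ≠ 0 ∧ a₄ ≠ 0 ∧
      a₁ ^ 2 + a₂ ^ 2 + a₃ ^ 2 + a₄ ^ 2 = (4 : ℤ) ^ α * 2 := by
  induction α with
  | zero =>
    rintro ⟨a₁, a₂, a₃, a₄, h1, h2, h3, h4, h⟩
    have s1 : 1 ≤ a₁^2 := by nlinarith [sq_nonneg a₁, sq_abs a₁, abs_pos.mpr h1, Int.add_one_le_iff.mpr (abs_pos.mpr h1)]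
    have s2 : 1 ≤ a₂^2 := by nlinarith [abs_pos.mpr h2, sq_abs a₂, Int.add_one_le_iff.mpr (abs_pos.mpr h2)]
    have s3 : 1 ≤ a₃^2 := by nlinarith [abs_pos.mpr h3, sq_abs a₃, Int.add_one_le_iff.mpr (abs_pos.mpr h3)]
    have s4 : 1 ≤ a₄^2 := by nlinarith [abs_pos.mpr h4, sq_abs a₄, Int.add_one_le_iff.mpr (abs_pos.mpr h4)]
    simp at h
    omega
  | succ n ih =>
    rintro ⟨a₁, a₂, a₃, a₄, h1, h2, h3, h4, h⟩
    have hdvd : (8:ℤ) ∣ a₁^2 + a₂^2 + a₃^2 + a₄^2 := by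
      rw [h, pow_succ]
      exact ⟨4^n, by ring⟩
    obtain ⟨⟨b₁, rfl⟩, ⟨b₂, rfl⟩, ⟨b₃, rfl⟩, ⟨b₄, rfl⟩⟩ := even_of_sum_sq _ _ _ _ hdvd
    exact ih ⟨b₁, b₂, b₃, b₄, by simpa using h1, by simpa using h2, by simpa using h3,
      by simpa using h4, by nlinarith [h, pow_succ (4:ℤ) n]⟩
end

section
/- Suppose there exists a positive constant K such that every squarefree positive integer q admits integers a₁,a₂,a₃,a₄ with a₁²+a₂²+a₃²+a₄² = q and each aᵢ = 0 or K²aᵢ² ≥ q. Then for every positive integer n, F(Γ_n) < K²n², where F(Γ_n) is the largest non-negative integer not expressible as a finite sum of squares of integers ≥ n. -/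
theorem frobenius_bound_of_squarefree_large_squares (K : ℕ) (hK : 0 < K)
    (hhyp : ∀ q : ℕ, 0 < q → Squarefree q → ∃ a : Fin 4 → ℤ,
      (∑ i, (a i) ^ 2 = (q : ℤ)) ∧ ∀ i, a i = 0 ∨ (q : ℤ) ≤ (K : ℤ) ^ 2 * (a i) ^ 2) :
    ∀ n : ℕ, 0 < n → ∀ m : ℕ, ¬ InGamma n m → m < K ^ 2 * n ^ 2 := by
  intro n hn m hm
  by_contra hlt
  push_neg at hlt
  apply hm
  obtain ⟨q, b, hqb, hq⟩ := Nat.sq_mul_squarefree m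
  have hm0 : 0 < m := lt_of_lt_of_le (by positivity) hlt
  have hq0 : 0 < q := by
    rcases Nat.eq_zero_or_pos q with h0 | h0
    · rw [h0, mul_zero] at hqb; omega
    · exact h0
  obtain ⟨a, hsum, hbig⟩ := hhyp q hq0 hq
  have hmz : (m : ℤ) = (b : ℤ) ^ 2 * (q : ℤ) := by exact_mod_cast hqb.symm
  refine ⟨(Finset.univ.filter (fun i => a i ≠ 0)).val.map (fun i => b * (a i).natAbs),
    ?_, ?_⟩
  · intro x hx
    simp only [Multiset.mem_map, Finset.mem_val, Finset.mem_filter] at hx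
    obtain ⟨i, ⟨_, hi⟩, rfl⟩ := hx
    rcases hbig i with h0 | hKq
    · exact absurd h0 hi
    have hz : (K : ℤ) ^ 2 * (n : ℤ) ^ 2 ≤ (K : ℤ) ^ 2 * ((b * (a i).natAbs : ℕ) : ℤ) ^ 2 := by
      calc (K : ℤ) ^ 2 * (n : ℤ) ^ 2 ≤ (m : ℤ) := by exact_mod_cast hlt
        _ = (b : ℤ) ^ 2 * (q : ℤ) := hmz
        _ ≤ (b : ℤ) ^ 2 * ((K : ℤ) ^ 2 * (a i) ^ 2) := by
            apply mul_le_mul_of_nonneg_left hKq (by positivity)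
        _ = (K : ℤ) ^ 2 * ((b * (a i).natAbs : ℕ) : ℤ) ^ 2 := by
            push_cast
            rw [mul_pow, sq_abs]
            ring
    have hK2 : (0 : ℤ) < (K : ℤ) ^ 2 := by positivity
    have hn2 : (n : ℤ) ^ 2 ≤ ((b * (a i).natAbs : ℕ) : ℤ) ^ 2 := le_of_mul_le_mul_left hz hK2
    have hn2' : n ^ 2 ≤ (b * (a i).natAbs) ^ 2 := by exact_mod_cast hn2
    exact (Nat.pow_le_pow_iff_left (by norm_num)).mp hn2'
  · have key : ∑ i ∈ Finset.univ.filter (fun i => a i ≠ 0), (b * (a i).natAbs) ^ 2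
        = ∑ i : Fin 4, (b * (a i).natAbs) ^ 2 := by
      apply Finset.sum_filter_of_ne
      intro i _ hne
      intro h0
      apply hne
      simp [h0]
    have hq' : ∑ i : Fin 4, ((a i).natAbs) ^ 2 = q := by
      have : ((∑ i : Fin 4, ((a i).natAbs) ^ 2 : ℕ) : ℤ) = (q : ℤ) := by
        push_cast
        rw [← hsum]
        congr 1
        ext i
        rw [sq_abs]
      exact_mod_cast this
    rw [Multiset.map_map]
    show ((Finset.univ.filter (fun i => a i ≠ 0)).val.map
      (fun i => (b * (a i).natAbs) ^ 2)).sum = m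
    rw [show ((Finset.univ.filter (fun i => a i ≠ 0)).val.map
        (fun i => (b * (a i).natAbs) ^ 2)).sum
      = ∑ i ∈ Finset.univ.filter (fun i => a i ≠ 0), (b * (a i).natAbs) ^ 2 from rfl]
    rw [key]
    calc ∑ i : Fin 4, (b * (a i).natAbs) ^ 2 = b ^ 2 * ∑ i : Fin 4, ((a i).natAbs) ^ 2 := by
          rw [Finset.mul_sum]; congr 1; ext i; ring
      _ = b ^ 2 * q := by rw [hq']
      _ = m := hqb
end
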